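/- arXiv:1911.03645 — 5 statements merged into one kernel-verified Lean document; each statement's English description precedes it below -/
import Mathlib

section
/- Let p = (p_1, ..., p_c) be a probability vector with all entries strictly positive, and define the pairwise likelihood matrix R(p) by r_ij = p_i / (p_i + p_j) for i ≠ j and r_ii = 0. Then the map p ↦ R(p) is injective on the set of strictly positive probability vectors. -/
/-- The map from strictly positive probability vectors to their pairwise
likelihood matrices (`r i j = p i / (p i + p j)` off-diagonal, zero diagonal)
is injective. -/
theorem pairwise_likelihood_matrix_injOn (c : ℕ) (hc : 2 ≤ c) :
    Set.InjOn
      (fun p : Fin c → ℝ =>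
        (Matrix.of fun i j => if i = j then (0 : ℝ) else p i / (p i + p j)))
      {p : Fin c → ℝ | (∀ i, 0 < p i) ∧ ∑ i, p i = 1} := by
  rintro p ⟨hp, hps⟩ q ⟨hq, hqs⟩ h
  have key : ∀ i j, p i * q j = q i * p j := by
    intro i j
    rcases eq_or_ne i j with rfl | hij
    · ring
    · have hij' := congrFun (congrFun h i) j
      simp only [Matrix.of_apply, if_neg hij] at hij'
      have hpd : p i + p j ≠ 0 := ne_of_gt (add_pos (hp i) (hp j))
      have hqd : q i + q j ≠ 0 := ne_of_gt (add_pos (hq i) (hq j))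
      field_simp at hij'
      nlinarith [hij']
  funext i
  have hsum : p i * (∑ j, q j) = q i * (∑ j, p j) := by
    rw [Finset.mul_sum, Finset.mul_sum]
    exact Finset.sum_congr rfl fun j _ => key i j
  rw [hps, hqs] at hsum
  linarith
end

section
/- Let R be a c×c matrix with zero diagonal, entries in (0,1) off-diagonal, and r_ij + r_ji = 1 for i ≠ j. If the positive probability vector p satisfies r_ij p_j = r_ji p_i for all i ≠ j, then p is the unique positive probability vector achieving δ(p) = 0 for the Wu-Lin-Weng functional δ(p) = ∑_i ∑_{j≠i} (r_ij p_j − r_ji p_i)². -/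
/-- If a positive probability vector `p` satisfies `r i j * p j = r j i * p i`
for all `i ≠ j`, then `p` is the unique positive probability vector on which
the Wu-Lin-Weng functional vanishes. -/
theorem wu_lin_weng_unique_minimizer (c : ℕ) (hc : 2 ≤ c)
    (R : Matrix (Fin c) (Fin c) ℝ)
    (hdiag : ∀ i, R i i = 0)
    (hmem : ∀ i j, i ≠ j → R i j ∈ Set.Ioo (0 : ℝ) 1)
    (hsym : ∀ i j, i ≠ j → R i j + R j i = 1)
    (p : Fin c → ℝ) (hpos : ∀ i, 0 < p i) (hsum : ∑ i, p i = 1)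
    (hbal : ∀ i j, i ≠ j → R i j * p j = R j i * p i) :
    (∑ i, ∑ j ∈ Finset.univ.erase i, (R i j * p j - R j i * p i) ^ 2 = 0) ∧
    (∀ q : Fin c → ℝ, (∀ i, 0 < q i) → ∑ i, q i = 1 →
      ∑ i, ∑ j ∈ Finset.univ.erase i, (R i j * q j - R j i * q i) ^ 2 = 0 →
      q = p) := by
  constructor
  · refine Finset.sum_eq_zero fun i _ => Finset.sum_eq_zero fun j hj => ?_
    have hij : i ≠ j := (Finset.mem_erase.mp hj).1.symm
    rw [hbal i j hij, sub_self]
    ring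
  · intro q hqpos hqsum hq0
    -- each term is zero
    have hterm : ∀ i j, i ≠ j → R i j * q j = R j i * q i := by
      intro i j hij
      have h1 := (Finset.sum_eq_zero_iff_of_nonneg
        (fun i _ => Finset.sum_nonneg fun j _ => sq_nonneg _)).mp hq0 i (Finset.mem_univ i)
      have h2 := (Finset.sum_eq_zero_iff_of_nonneg
        (fun j _ => sq_nonneg _)).mp h1 j
        (Finset.mem_erase.mpr ⟨hij.symm, Finset.mem_univ j⟩)
      have := pow_eq_zero_iff (n := 2) (by norm_num) |>.mp h2
      linarith [sub_eq_zero.mp this]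
    have key : ∀ i j : Fin c, q j * p i = q i * p j := by
      intro i j
      by_cases hij : i = j
      · subst hij; ring
      · have hR : R i j ≠ 0 := ne_of_gt (hmem i j hij).1
        have h1 := hbal i j hij
        have h2 := hterm i j hij
        have : R i j * (q j * p i) = R i j * (q i * p j) := by
          calc R i j * (q j * p i) = (R i j * q j) * p i := by ring
            _ = (R j i * q i) * p i := by rw [h2]
            _ = q i * (R j i * p i) := by ring
            _ = q i * (R i j * p j) := by rw [h1]
            _ = R i j * (q i * p j) := by ring
        exact mul_left_cancel₀ hR this
    funext i
    calc q i = q i * ∑ j, p j := by rw [hsum, mul_one]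
      _ = ∑ j, q i * p j := by rw [Finset.mul_sum]
      _ = ∑ j, q j * p i := by exact Finset.sum_congr rfl fun j _ => (key i j).symm
      _ = (∑ j, q j) * p i := by rw [Finset.sum_mul]
      _ = p i := by rw [hqsum, one_mul]
end

section
/- A family (θ_ij)_{i≠j} of real numbers arises from some positive probability vector p via θ_ij = log(1/r_ij − 1) with r_ij = p_i/(p_i+p_j) if and only if θ_ij = −θ_ji for all i ≠ j and θ_ij + θ_jk = θ_ik for all distinct i, j, k. Moreover the set of such families is a linear subspace of ℝ^{c(c−1)} of dimension c − 1. -/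
/-- The linear map sending `f` to the family `θ i j = f j - f i`. -/
def btLmap (c : ℕ) : (Fin c → ℝ) →ₗ[ℝ] (Fin c → Fin c → ℝ) where
  toFun f := fun i j => f j - f i
  map_add' f g := by funext i j; simp [Pi.add_apply]; ring
  map_smul' r f := by funext i j; simp [Pi.smul_apply, smul_eq_mul]; ring

lemma bt_log_eq {a b : ℝ} (ha : 0 < a) (hb : 0 < b) :
    Real.log (1 / (a / (a + b)) - 1) = Real.log b - Real.log a := by
  have h : 1 / (a / (a + b)) - 1 = b / a := by
    field_simp
    ring
  rw [h, Real.log_div hb.ne' ha.ne']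

lemma theta_repr {c : ℕ} (hc : 2 ≤ c) (θ : Fin c → Fin c → ℝ)
    (hd : ∀ i, θ i i = 0) (ha : ∀ i j, i ≠ j → θ i j = -θ j i)
    (hco : ∀ i j k, i ≠ j → j ≠ k → i ≠ k → θ i j + θ j k = θ i k) :
    ∀ i j, θ i j = θ ⟨0, by omega⟩ j - θ ⟨0, by omega⟩ i := by
  intro i j
  set z : Fin c := ⟨0, by omega⟩ with hz
  by_cases hij : i = j
  · subst hij; simp [hd]
  by_cases hiz : i = z
  · subst hiz; simp [hd]
  by_cases hjz : j = z
  · subst hjz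
    have := ha i z hij
    simp [hd]; linarith
  · have h1 := hco i z j hiz (Ne.symm hjz) hij
    have h2 := ha i z hiz
    linarith

/-- A family `θ` (with zero diagonal) arises from a positive probability
vector via `θ i j = log (1 / r i j - 1)`, `r i j = p i / (p i + p j)`, if and
only if it is antisymmetric and satisfies the additive cocycle condition;
moreover the set of such families is a linear subspace of dimension `c - 1`. -/
theorem bradley_terry_theta_characterization (c : ℕ) (hc : 2 ≤ c) :
    (∀ θ : Fin c → Fin c → ℝ, (∀ i, θ i i = 0) →
      ((∃ p : Fin c → ℝ, (∀ i, 0 < p i) ∧ ∑ i, p i = 1 ∧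
          ∀ i j, i ≠ j → θ i j = Real.log (1 / (p i / (p i + p j)) - 1)) ↔
        ((∀ i j, i ≠ j → θ i j = -θ j i) ∧
         (∀ i j k, i ≠ j → j ≠ k → i ≠ k → θ i j + θ j k = θ i k)))) ∧
    (∃ V : Submodule ℝ (Fin c → Fin c → ℝ),
      (V : Set (Fin c → Fin c → ℝ)) =
        {θ | (∀ i, θ i i = 0) ∧ (∀ i j, i ≠ j → θ i j = -θ j i) ∧
             (∀ i j k, i ≠ j → j ≠ k → i ≠ k → θ i j + θ j k = θ i k)} ∧
      Module.finrank ℝ V = c - 1) := by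
  have hz : (0 : ℕ) < c := by omega
  set z : Fin c := ⟨0, by omega⟩ with hzdef
  constructor
  · intro θ hd
    constructor
    · rintro ⟨p, hp, _, hθ⟩
      have key : ∀ i j, i ≠ j → θ i j = Real.log (p j) - Real.log (p i) := by
        intro i j hij
        rw [hθ i j hij, bt_log_eq (hp i) (hp j)]
      constructor
      · intro i j hij
        rw [key i j hij, key j i (Ne.symm hij)]; ring
      · intro i j k hij hjk hik
        rw [key i j hij, key j k hjk, key i k hik]; ring
    · rintro ⟨ha, hco⟩
      set f : Fin c → ℝ := θ z with hf
      set S : ℝ := ∑ k, Real.exp (f k) with hS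
      haveI : Nonempty (Fin c) := ⟨z⟩
      have hSpos : 0 < S := by
        apply Finset.sum_pos (fun k _ => Real.exp_pos _)
        exact Finset.univ_nonempty
      refine ⟨fun i => Real.exp (f i) / S, fun i => div_pos (Real.exp_pos _) hSpos, ?_, ?_⟩
      · rw [← Finset.sum_div, ← hS, div_self hSpos.ne']
      · intro i j hij
        have hrep := theta_repr hc θ hd ha hco i j
        rw [bt_log_eq (div_pos (Real.exp_pos _) hSpos) (div_pos (Real.exp_pos _) hSpos)]
        rw [Real.log_div (Real.exp_pos _).ne' hSpos.ne',
            Real.log_div (Real.exp_pos _).ne' hSpos.ne',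
            Real.log_exp, Real.log_exp]
        rw [hrep]; ring
  · refine ⟨LinearMap.range (btLmap c), ?_, ?_⟩
    · ext θ
      simp only [SetLike.mem_coe, LinearMap.mem_range, Set.mem_setOf_eq]
      constructor
      · rintro ⟨f, rfl⟩
        refine ⟨fun i => by simp [btLmap], fun i j _ => by simp [btLmap],
          fun i j k _ _ _ => by simp [btLmap]⟩
      · rintro ⟨hd, ha, hco⟩
        refine ⟨θ z, ?_⟩
        funext i j
        have := theta_repr hc θ hd ha hco i j
        simp [btLmap]
        linarith
    · have hker : LinearMap.ker (btLmap c) = Submodule.span ℝ {(fun _ => 1 : Fin c → ℝ)} := by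
        ext f
        rw [LinearMap.mem_ker, Submodule.mem_span_singleton]
        constructor
        · intro h
          refine ⟨f z, ?_⟩
          funext i
          have := congrFun (congrFun h z) i
          simp [btLmap] at this
          simp [Pi.smul_apply, smul_eq_mul]
          linarith
        · rintro ⟨a, rfl⟩
          funext i j
          simp [btLmap]
      have hone : (fun _ => 1 : Fin c → ℝ) ≠ 0 := by
        intro h
        have := congrFun h z
        norm_num at this
      have hk1 : Module.finrank ℝ (LinearMap.ker (btLmap c)) = 1 := by
        rw [hker, finrank_span_singleton hone]
      have := LinearMap.finrank_range_add_finrank_ker (btLmap c)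
      rw [hk1, Module.finrank_pi] at this
      simp at this
      omega
end

section
/- For c ≥ 3, there exists an admissible pairwise likelihood matrix R (zero diagonal, off-diagonal entries in (0,1), r_ij + r_ji = 1) that is not the pairwise likelihood matrix of any positive probability vector. -/
/-- For `c ≥ 3`, there is an admissible pairwise matrix which is not the
pairwise likelihood matrix of any positive probability vector. -/
theorem exists_admissible_not_bradley_terry (c : ℕ) (hc : 3 ≤ c) :
    ∃ R : Matrix (Fin c) (Fin c) ℝ,
      (∀ i, R i i = 0) ∧
      (∀ i j, i ≠ j → R i j ∈ Set.Ioo (0 : ℝ) 1) ∧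
      (∀ i j, i ≠ j → R i j + R j i = 1) ∧
      ¬ ∃ p : Fin c → ℝ, (∀ i, 0 < p i) ∧ ∑ i, p i = 1 ∧
          ∀ i j, i ≠ j → R i j = p i / (p i + p j) := by
  set i0 : Fin c := ⟨0, by omega⟩ with hi0
  set i1 : Fin c := ⟨1, by omega⟩ with hi1
  set i2 : Fin c := ⟨2, by omega⟩ with hi2
  have h01 : i0 ≠ i1 := by simp [hi0, hi1, Fin.ext_iff]
  have h02 : i0 ≠ i2 := by simp [hi0, hi2, Fin.ext_iff]
  have h12 : i1 ≠ i2 := by simp [hi1, hi2, Fin.ext_iff]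
  refine ⟨fun i j => if i = j then 0 else if i = i0 ∧ j = i1 then 2/3
      else if i = i1 ∧ j = i0 then 1/3 else 1/2, fun i => by simp, ?_, ?_, ?_⟩
  · intro i j hij
    simp only [if_neg hij]
    split_ifs <;> constructor <;> norm_num
  · intro i j hij
    simp only [if_neg hij, if_neg (Ne.symm hij)]
    split_ifs <;> (try norm_num) <;> simp_all
  · rintro ⟨p, hpos, -, hR⟩
    have e02 := hR i0 i2 h02
    have e12 := hR i1 i2 h12
    have e01 := hR i0 i1 h01
    simp only [if_neg h02, if_neg h12, if_neg h01, h01.symm, h02.symm, h12.symm,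
      ne_eq, not_false_eq_true, eq_self_iff_true, true_and, and_true, and_self,
      if_true, if_false, false_and, and_false] at e02 e12 e01
    have ha := hpos i0
    have hb := hpos i1
    have hcc := hpos i2
    rw [div_eq_iff (by positivity)] at e02 e12 e01
    rw [div_mul_eq_mul_div, eq_div_iff (by positivity)] at e02 e12 e01
    nlinarith [e02, e12, e01]
end

section
/- Let R be an admissible pairwise matrix (zero diagonal, off-diagonal entries in (0,1), r_ij + r_ji = 1) satisfying the cocycle condition (r_ij/(1−r_ij))·(r_jk/(1−r_jk)) = r_ik/(1−r_ik) for all distinct i,j,k. Then there exists a unique positive probability vector p with r_ij = p_i/(p_i+p_j) for all i ≠ j. -/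
/-- An admissible pairwise matrix satisfying the multiplicative cocycle
condition is the pairwise likelihood matrix of a unique positive probability
vector. -/
theorem cocycle_implies_bradley_terry (c : ℕ) (hc : 2 ≤ c)
    (R : Matrix (Fin c) (Fin c) ℝ)
    (hdiag : ∀ i, R i i = 0)
    (hmem : ∀ i j, i ≠ j → R i j ∈ Set.Ioo (0 : ℝ) 1)
    (hsym : ∀ i j, i ≠ j → R i j + R j i = 1)
    (hcoc : ∀ i j k, i ≠ j → j ≠ k → i ≠ k →
      (R i j / (1 - R i j)) * (R j k / (1 - R j k)) = R i k / (1 - R i k)) :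
    ∃! p : Fin c → ℝ, (∀ i, 0 < p i) ∧ ∑ i, p i = 1 ∧
      ∀ i j, i ≠ j → R i j = p i / (p i + p j) := by
  have hc0 : 0 < c := by omega
  set z : Fin c := ⟨0, hc0⟩ with hz
  set f : Fin c → ℝ := fun i => if i = z then 1 else R i z / (1 - R i z) with hf
  have hfz : f z = 1 := by simp [hf]
  have hfpos : ∀ i, 0 < f i := by
    intro i
    by_cases h : i = z
    · simp [hf, h]
    · have hm := hmem i z h
      simp only [hf, if_neg h]
      exact div_pos hm.1 (by linarith [hm.2])
  -- key: for j ≠ z, R z j / (1 - R z j) = 1 / f j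
  have hzj : ∀ j, j ≠ z → R z j / (1 - R z j) = 1 / f j := by
    intro j hj
    have hs := hsym j z hj
    have hm := hmem j z hj
    have h1 : R z j = 1 - R j z := by linarith
    have h2 : (1 : ℝ) - R z j = R j z := by linarith
    rw [h1, sub_sub_cancel]
    simp only [hf, if_neg hj, one_div_div]
  have hratio : ∀ i j, i ≠ j → R i j / (1 - R i j) = f i / f j := by
    intro i j hij
    by_cases hjz : j = z
    · subst hjz
      rw [hfz, div_one]
      simp only [hf, if_neg hij]
    · by_cases hiz : i = z
      · subst hiz
        rw [hzj j hjz, hfz]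
      · have h := hcoc i z j hiz (Ne.symm hjz) hij
        rw [hzj j hjz] at h
        rw [← h]
        simp only [hf, if_neg hiz]
        field_simp
  have hkey : ∀ i j, i ≠ j → R i j = f i / (f i + f j) := by
    intro i j hij
    have h := hratio i j hij
    have hm := hmem i j hij
    have hfi := hfpos i; have hfj := hfpos j
    have h1 : (0 : ℝ) < 1 - R i j := by linarith [hm.2]
    have hsum : (0 : ℝ) < f i + f j := by linarith
    rw [div_eq_div_iff h1.ne' hfj.ne'] at h
    rw [eq_div_iff hsum.ne']
    nlinarith [h]
  set S : ℝ := ∑ i, f i with hS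
  have hSpos : 0 < S := Finset.sum_pos (fun i _ => hfpos i) ⟨z, Finset.mem_univ z⟩
  refine ⟨fun i => f i / S, ⟨fun i => div_pos (hfpos i) hSpos, ?_, ?_⟩, ?_⟩
  · rw [← Finset.sum_div]
    exact div_self hSpos.ne'
  · intro i j hij
    rw [hkey i j hij]
    have h1 : f i + f j ≠ 0 := by have := hfpos i; have := hfpos j; linarith
    field_simp
  · intro q ⟨hqpos, hqsum, hq⟩
    have hqf : ∀ i, q i = q z * f i := by
      intro i
      by_cases hiz : i = z
      · subst hiz; rw [hfz, mul_one]
      · have h := hq i z hiz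
        have hqi := hqpos i; have hqz := hqpos z
        have hsum : (0 : ℝ) < q i + q z := by linarith
        simp only [hf, if_neg hiz]
        rw [h]
        have h1 : (1 : ℝ) - q i / (q i + q z) = q z / (q i + q z) := by
          field_simp
          ring
        rw [h1]
        field_simp
    have hSq : q z * S = 1 := by
      rw [hS, Finset.mul_sum, ← hqsum]
      exact Finset.sum_congr rfl fun i _ => (hqf i).symm
    have hqz : q z = 1 / S := by
      field_simp at hSq ⊢
      linarith
    funext i
    rw [hqf i, hqz]
    ring
end
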